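/- Suppose s_i[0], x^k_i[0], r_i[0] ∈ [0,1] and s_i[0] + ∑_{k=1}^m x^k_i[0] + r_i[0] = 1 for all i, k. Fix a virus index k ∈ {1,…,m} and let M^k = I − hΓ^k + hB^k. If the spectral radius satisfies ρ(M^k) < 1, then the infection state of virus k converges to zero exponentially: there exist constants α > 0 and ω with 0 ≤ ω < 1 such that ‖x^k[t]‖ ≤ α · ‖x^k[0]‖ · ω^t for all t ∈ ℤ_{≥0}, where ‖·‖ is the Euclidean norm. -/

import Mathlib

open Filter Matrix

attribute [local instance] Matrix.linftyOpNormedAddCommGroup Matrix.linftyOpNormedRing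
  Matrix.linftyOpNormedAlgebra

lemma pow_norm_le_of_specRad_lt_one {A : Type*} [NormedRing A] [NormedAlgebra ℂ A]
    [CompleteSpace A] (a : A) (ha : spectralRadius ℂ a < 1) :
    ∃ C ω : ℝ, 0 < C ∧ 0 ≤ ω ∧ ω < 1 ∧ ∀ t : ℕ, ‖a ^ t‖ ≤ C * ω ^ t := by
  obtain ⟨c, hc1, hc2⟩ := exists_between ha
  have hc0 : 0 < c := zero_le.trans_lt hc1
  have hcne : c ≠ ⊤ := (hc2.trans_le le_top).ne
  set ω := c.toReal with hωdef
  have hω0 : 0 < ω := ENNReal.toReal_pos hc0.ne' hcne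
  have hω1 : ω < 1 := by
    rw [hωdef, ← ENNReal.toReal_one]
    exact ENNReal.toReal_strict_mono ENNReal.one_ne_top hc2
  have hev : ∀ᶠ t : ℕ in atTop, ENNReal.ofReal (‖a ^ t‖ ^ (1 / (t : ℝ))) < c :=
    (spectrum.pow_norm_pow_one_div_tendsto_nhds_spectralRadius a).eventually_lt_const hc1
  obtain ⟨T, hT⟩ := eventually_atTop.mp hev
  have key : ∀ t : ℕ, T ≤ t → 1 ≤ t → ‖a ^ t‖ ≤ ω ^ t := by
    intro t h1 h2
    have h3 := hT t h1
    rw [← ENNReal.ofReal_toReal hcne] at h3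
    have hlt : ‖a ^ t‖ ^ (1 / (t : ℝ)) < ω :=
      (ENNReal.ofReal_lt_ofReal_iff_of_nonneg (by positivity)).mp h3
    have ht0 : (0 : ℝ) < t := by exact_mod_cast h2
    have h4 := Real.rpow_lt_rpow (by positivity) hlt ht0
    rw [← Real.rpow_mul (norm_nonneg _), one_div_mul_cancel ht0.ne', Real.rpow_one,
      Real.rpow_natCast] at h4
    exact h4.le
  obtain ⟨C, hCdef⟩ : ∃ C : ℝ, C = 1 + ∑ t ∈ Finset.range (T + 1), ‖a ^ t‖ / ω ^ t := ⟨_, rfl⟩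
  have hsum0 : (0:ℝ) ≤ ∑ t ∈ Finset.range (T + 1), ‖a ^ t‖ / ω ^ t :=
    Finset.sum_nonneg fun t _ => div_nonneg (norm_nonneg _) (by positivity)
  have hC1 : 1 ≤ C := by linarith
  have hC : 0 < C := by linarith
  refine ⟨C, ω, hC, hω0.le, hω1, fun t => ?_⟩
  rcases lt_or_ge t (T + 1) with h | h
  · have hmem : t ∈ Finset.range (T + 1) := Finset.mem_range.mpr h
    have h1 : ‖a ^ t‖ / ω ^ t ≤ C := by
      have := Finset.single_le_sum
        (f := fun t => ‖a ^ t‖ / ω ^ t)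
        (fun u _ => div_nonneg (norm_nonneg _) (by positivity)) hmem
      linarith
    calc ‖a ^ t‖ = ‖a ^ t‖ / ω ^ t * ω ^ t := by field_simp
    _ ≤ C * ω ^ t := mul_le_mul_of_nonneg_right h1 (by positivity)
  · have := key t (by omega) (by omega)
    calc ‖a ^ t‖ ≤ ω ^ t := this
    _ ≤ C * ω ^ t := by nlinarith [pow_pos hω0 t, hC1]

lemma entry_norm_le_linfty {n : ℕ} (B : Matrix (Fin n) (Fin n) ℂ) (i j : Fin n) :
    ‖B i j‖ ≤ ‖B‖ := by
  have h1 : ‖B i j‖₊ ≤ ∑ j', ‖B i j'‖₊ :=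
    Finset.single_le_sum (f := fun j' => ‖B i j'‖₊) (fun _ _ => zero_le) (Finset.mem_univ j)
  have h2 : (∑ j', ‖B i j'‖₊) ≤ ‖B‖₊ := by
    rw [Matrix.linfty_opNNNorm_def]
    exact Finset.le_sup (f := fun i => ∑ j', ‖B i j'‖₊) (Finset.mem_univ i)
  have := h1.trans h2
  exact_mod_cast this

/-- Theorem 1 of the paper: if `ρ(M^k) < 1` where `M^k = I - hΓ^k + hB^k`, then the
infection level of virus `k` converges to zero in exponential time
(the spectral radius is taken over `ℂ`). -/
theorem multiVirusSIR_exponential_eradication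
    (n m : ℕ) (hn : 0 < n) (hm : 0 < m) (h : ℝ) (hh : 0 < h)
    (β : Fin m → Fin n → Fin n → ℝ) (γ : Fin m → Fin n → ℝ)
    (hβ : ∀ k i j, 0 ≤ β k i j) (hγ : ∀ k i, 0 < γ k i)
    (hβsum : ∀ i, h * (∑ k, ∑ j, β k i j) ≤ 1)
    (hγsum : ∀ i, h * (∑ k, γ k i) ≤ 1)
    (s : ℕ → Fin n → ℝ) (x : ℕ → Fin m → Fin n → ℝ) (r : ℕ → Fin n → ℝ)
    (hs : ∀ t i, s (t + 1) i = s t i - h * (s t i * ∑ k, ∑ j, β k i j * x t k j))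
    (hx : ∀ t k i, x (t + 1) k i
      = x t k i + h * (s t i * (∑ j, β k i j * x t k j) - γ k i * x t k i))
    (hr : ∀ t i, r (t + 1) i = r t i + h * ∑ k, γ k i * x t k i)
    (hinit : ∀ i, s 0 i ∈ Set.Icc (0 : ℝ) 1 ∧ (∀ k, x 0 k i ∈ Set.Icc (0 : ℝ) 1) ∧
      r 0 i ∈ Set.Icc (0 : ℝ) 1 ∧ s 0 i + (∑ k, x 0 k i) + r 0 i = 1)
    (k : Fin m)
    (M : Matrix (Fin n) (Fin n) ℝ)
    (hM : M = 1 - h • Matrix.diagonal (γ k) + h • Matrix.of (β k))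
    (hρ : spectralRadius ℂ (M.map (algebraMap ℝ ℂ)) < 1) :
    ∃ α ω : ℝ, 0 < α ∧ 0 ≤ ω ∧ ω < 1 ∧
      ∀ t : ℕ, Real.sqrt (∑ i, (x t k i) ^ 2)
        ≤ α * Real.sqrt (∑ i, (x 0 k i) ^ 2) * ω ^ t := by
  classical
  -- γ bound: h * γ k' i ≤ 1
  have hγ1 : ∀ k' i, h * γ k' i ≤ 1 := by
    intro k' i
    have h1 : γ k' i ≤ ∑ k'', γ k'' i :=
      Finset.single_le_sum (f := fun k'' => γ k'' i) (fun k'' _ => (hγ k'' i).le)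
        (Finset.mem_univ k')
    calc h * γ k' i ≤ h * ∑ k'', γ k'' i := by nlinarith
    _ ≤ 1 := hγsum i
  -- Invariant
  have inv : ∀ t i, (0 ≤ s t i ∧ s t i ≤ 1) ∧ (∀ k', 0 ≤ x t k' i ∧ x t k' i ≤ 1) ∧
      0 ≤ r t i ∧ s t i + (∑ k', x t k' i) + r t i = 1 := by
    intro t
    induction t with
    | zero =>
      intro i
      obtain ⟨hs0, hx0, hr0, hsum0⟩ := hinit i
      exact ⟨⟨hs0.1, hs0.2⟩, fun k' => ⟨(hx0 k').1, (hx0 k').2⟩, hr0.1, hsum0⟩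
    | succ t ih =>
      -- basic facts at time t
      have hx01 : ∀ k' j, 0 ≤ x t k' j ∧ x t k' j ≤ 1 := fun k' j => (ih j).2.1 k'
      have hA_nonneg : ∀ k' i, 0 ≤ ∑ j, β k' i j * x t k' j := fun k' i =>
        Finset.sum_nonneg fun j _ => mul_nonneg (hβ k' i j) (hx01 k' j).1
      have hAsum_nonneg : ∀ i, 0 ≤ ∑ k', ∑ j, β k' i j * x t k' j := fun i =>
        Finset.sum_nonneg fun k' _ => hA_nonneg k' i
      have hAsum_le : ∀ i, h * ∑ k', ∑ j, β k' i j * x t k' j ≤ 1 := by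
        intro i
        have h1 : (∑ k', ∑ j, β k' i j * x t k' j) ≤ ∑ k', ∑ j, β k' i j := by
          refine Finset.sum_le_sum fun k' _ => Finset.sum_le_sum fun j _ => ?_
          nlinarith [(hx01 k' j).1, (hx01 k' j).2, hβ k' i j]
        calc h * ∑ k', ∑ j, β k' i j * x t k' j ≤ h * ∑ k', ∑ j, β k' i j := by nlinarith
        _ ≤ 1 := hβsum i
      have hs_new : ∀ i, 0 ≤ s (t+1) i ∧ s (t+1) i ≤ 1 := by
        intro i
        obtain ⟨⟨hs0, hs1⟩, _, _, _⟩ := ih i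
        rw [hs t i]
        constructor
        · nlinarith [mul_nonneg hs0 (sub_nonneg.mpr (hAsum_le i))]
        · nlinarith [mul_nonneg hh.le (mul_nonneg hs0 (hAsum_nonneg i))]
      have hx_nonneg : ∀ k' i, 0 ≤ x (t+1) k' i := by
        intro k' i
        obtain ⟨⟨hs0, hs1⟩, _, _, _⟩ := ih i
        rw [hx t k' i]
        have h1 := hγ1 k' i
        have h2 := (hx01 k' i).1
        have h3 := hA_nonneg k' i
        nlinarith [mul_nonneg h2 (sub_nonneg.mpr h1), mul_nonneg (mul_nonneg hh.le hs0) h3]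
      have hr_nonneg : ∀ i, 0 ≤ r (t+1) i := by
        intro i
        obtain ⟨_, _, hr0, _⟩ := ih i
        rw [hr t i]
        have : 0 ≤ ∑ k', γ k' i * x t k' i :=
          Finset.sum_nonneg fun k' _ => mul_nonneg (hγ k' i).le (hx01 k' i).1
        nlinarith
      have hsum_new : ∀ i, s (t+1) i + (∑ k', x (t+1) k' i) + r (t+1) i = 1 := by
        intro i
        obtain ⟨_, _, _, hsum⟩ := ih i
        have hxsum : ∑ k', x (t+1) k' i
            = (∑ k', x t k' i) + h * (s t i * (∑ k', ∑ j, β k' i j * x t k' j)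
              - ∑ k', γ k' i * x t k' i) := by
          rw [Finset.sum_congr rfl fun k' _ => hx t k' i, Finset.sum_add_distrib,
            ← Finset.mul_sum, Finset.sum_sub_distrib, ← Finset.mul_sum]
        rw [hs t i, hr t i, hxsum]
        linarith [hsum]
      intro i
      refine ⟨hs_new i, fun k' => ⟨hx_nonneg k' i, ?_⟩, hr_nonneg i, hsum_new i⟩
      have h1 : x (t+1) k' i ≤ ∑ k'', x (t+1) k'' i :=
        Finset.single_le_sum (f := fun k'' => x (t+1) k'' i)
          (fun k'' _ => hx_nonneg k'' i) (Finset.mem_univ k')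
      have h2 := hsum_new i
      have h3 := (hs_new i).1
      have h4 := hr_nonneg i
      linarith
  -- Matrix entries
  have hMentry : ∀ i j, M i j = (if i = j then 1 - h * γ k i else 0) + h * β k i j := by
    intro i j
    rw [hM]
    simp only [Matrix.add_apply, Matrix.sub_apply, Matrix.smul_apply, Matrix.one_apply,
      Matrix.diagonal_apply, Matrix.of_apply, smul_eq_mul]
    split_ifs <;> ring
  have hMnonneg : ∀ i j, 0 ≤ M i j := by
    intro i j
    rw [hMentry i j]
    have := hγ1 k i
    have := hβ k i j
    split_ifs with hij <;> nlinarith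
  -- comparison : x (t+1) ≤ M * x t entrywise
  have hcomp : ∀ t i, x (t+1) k i ≤ ∑ j, M i j * x t k j := by
    intro t i
    have hrow : ∑ j, M i j * x t k j
        = (1 - h * γ k i) * x t k i + h * ∑ j, β k i j * x t k j := by
      rw [Finset.sum_congr rfl fun j _ => by rw [hMentry i j, add_mul]]
      rw [Finset.sum_add_distrib]
      congr 1
      · simp [ite_mul]
      · rw [Finset.mul_sum]; exact Finset.sum_congr rfl fun j _ => by ring
    rw [hx t k i, hrow]
    have hs1 := (inv t i).1.2
    have hs0 := (inv t i).1.1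
    have hA : 0 ≤ ∑ j, β k i j * x t k j :=
      Finset.sum_nonneg fun j _ => mul_nonneg (hβ k i j) ((inv t j).2.1 k).1
    nlinarith [mul_nonneg (mul_nonneg hh.le hA) (sub_nonneg.mpr hs1)]
  -- x t ≤ M^t x0 entrywise
  have hpow : ∀ t i, x t k i ≤ ((M ^ t) *ᵥ (x 0 k)) i := by
    intro t
    induction t with
    | zero => intro i; simp [Matrix.one_mulVec]
    | succ t ih =>
      intro i
      calc x (t+1) k i ≤ ∑ j, M i j * x t k j := hcomp t i
      _ ≤ ∑ j, M i j * ((M ^ t) *ᵥ (x 0 k)) j :=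
        Finset.sum_le_sum fun j _ => mul_le_mul_of_nonneg_left (ih j) (hMnonneg i j)
      _ = ((M ^ (t+1)) *ᵥ (x 0 k)) i := by
        rw [pow_succ']
        rw [← Matrix.mulVec_mulVec]
        rfl
  -- spectral decay
  haveI : CompleteSpace (Matrix (Fin n) (Fin n) ℂ) := FiniteDimensional.complete ℂ _
  obtain ⟨C, ω, hC, hω0, hω1, hdecay⟩ :=
    pow_norm_le_of_specRad_lt_one (M.map (algebraMap ℝ ℂ)) hρ
  have hmap : ∀ t : ℕ, (M.map (algebraMap ℝ ℂ)) ^ t = (M ^ t).map (algebraMap ℝ ℂ) := by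
    intro t
    have := map_pow (RingHom.mapMatrix (algebraMap ℝ ℂ)) M t
    simpa [RingHom.mapMatrix_apply] using this.symm
  have hentry : ∀ t i j, |(M ^ t) i j| ≤ C * ω ^ t := by
    intro t i j
    have h1 := entry_norm_le_linfty ((M.map (algebraMap ℝ ℂ)) ^ t) i j
    rw [hmap t] at h1
    have h2 : ((M ^ t).map (algebraMap ℝ ℂ)) i j = ((M ^ t) i j : ℂ) := rfl
    rw [h2, Complex.norm_real, Real.norm_eq_abs] at h1
    rw [← hmap t] at h1
    exact h1.trans (hdecay t)
  -- assemble
  have hx0_nonneg : ∀ j, 0 ≤ x 0 k j := fun j => ((inv 0 j).2.1 k).1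
  have hS0 : 0 ≤ ∑ j, x 0 k j := Finset.sum_nonneg fun j _ => hx0_nonneg j
  have hSsq : (∑ j, x 0 k j) ≤ Real.sqrt n * Real.sqrt (∑ j, (x 0 k j) ^ 2) := by
    have h1 : (∑ j, x 0 k j) ^ 2 ≤ n * ∑ j, (x 0 k j) ^ 2 := by
      have := sq_sum_le_card_mul_sum_sq (s := (Finset.univ : Finset (Fin n)))
        (f := fun j => x 0 k j)
      simpa using this
    calc (∑ j, x 0 k j) = Real.sqrt ((∑ j, x 0 k j) ^ 2) := (Real.sqrt_sq hS0).symm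
    _ ≤ Real.sqrt (n * ∑ j, (x 0 k j) ^ 2) := Real.sqrt_le_sqrt h1
    _ = Real.sqrt n * Real.sqrt (∑ j, (x 0 k j) ^ 2) := Real.sqrt_mul (by positivity) _
  refine ⟨n * C, ω, by positivity, hω0, hω1, fun t => ?_⟩
  -- bound each coordinate of M^t x0
  have hcoord : ∀ i, 0 ≤ ((M ^ t) *ᵥ (x 0 k)) i ∧
      ((M ^ t) *ᵥ (x 0 k)) i ≤ C * ω ^ t * ∑ j, x 0 k j := by
    intro i
    constructor
    · exact le_trans (((inv t i).2.1 k).1) (hpow t i)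
    · show (∑ j, (M ^ t) i j * x 0 k j) ≤ C * ω ^ t * ∑ j, x 0 k j
      rw [Finset.mul_sum]
      refine Finset.sum_le_sum fun j _ => ?_
      have h1 := hentry t i j
      have h2 := hx0_nonneg j
      have h3 : (M ^ t) i j ≤ C * ω ^ t := (le_abs_self _).trans h1
      nlinarith
  have hb_nonneg : 0 ≤ C * ω ^ t * ∑ j, x 0 k j := by positivity
  have hstep1 : (∑ i, (x t k i) ^ 2) ≤ ∑ i : Fin n, (C * ω ^ t * ∑ j, x 0 k j) ^ 2 := by
    refine Finset.sum_le_sum fun i _ => ?_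
    have h0 := ((inv t i).2.1 k).1
    have h1 := hpow t i
    have h2 := (hcoord i).2
    nlinarith
  calc Real.sqrt (∑ i, (x t k i) ^ 2)
      ≤ Real.sqrt (∑ i : Fin n, (C * ω ^ t * ∑ j, x 0 k j) ^ 2) := Real.sqrt_le_sqrt hstep1
    _ = Real.sqrt (n * (C * ω ^ t * ∑ j, x 0 k j) ^ 2) := by
        rw [Finset.sum_const]; simp [mul_comm]
    _ = Real.sqrt n * (C * ω ^ t * ∑ j, x 0 k j) := by
        rw [Real.sqrt_mul (by positivity), Real.sqrt_sq hb_nonneg]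
    _ ≤ Real.sqrt n * (C * ω ^ t * (Real.sqrt n * Real.sqrt (∑ j, (x 0 k j) ^ 2))) := by
        have hCω : 0 ≤ C * ω ^ t := by positivity
        have := mul_le_mul_of_nonneg_left hSsq hCω
        nlinarith [Real.sqrt_nonneg (n:ℝ)]
    _ = (n * C) * Real.sqrt (∑ j, (x 0 k j) ^ 2) * ω ^ t := by
        have hnn : Real.sqrt n * Real.sqrt n = (n:ℝ) := Real.mul_self_sqrt (by positivity)
        linear_combination (C * ω ^ t * Real.sqrt (∑ j, (x 0 k j) ^ 2)) * hnn
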